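/- Let Δ be a Cohen–Macaulay simplicial complex of dimension d−1 with CM-connectivity sequence (q_0,…,q_{d−1}). Then the number of (d−1)-dimensional faces of Δ satisfies f_{d−1}(Δ) ≥ q_0 q_1 ⋯ q_{d−1} / d!. -/

import Mathlib

open scoped Classical

namespace MultConj

variable {n : ℕ}

/-- `K` is (the set of faces of) an abstract simplicial complex on the
vertex set `Fin n`: it contains the empty face and is closed under subsets. -/
def IsComplex (K : Finset (Finset (Fin n))) : Prop :=
  ∅ ∈ K ∧ ∀ F ∈ K, ∀ G ⊆ F, G ∈ K

/-- The induced subcomplex `Δ_W` on a vertex set `W`. -/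
def induced (K : Finset (Finset (Fin n))) (W : Finset (Fin n)) :
    Finset (Finset (Fin n)) :=
  K.filter fun F => F ⊆ W

/-- The link of a face `F`. -/
def link (K : Finset (Finset (Fin n))) (F : Finset (Fin n)) :
    Finset (Finset (Fin n)) :=
  K.filter fun G => F ∩ G = ∅ ∧ F ∪ G ∈ K

/-- The `i`-skeleton: all faces of dimension at most `i`,
i.e. with at most `i+1` vertices. -/
def skel (K : Finset (Finset (Fin n))) (i : ℕ) : Finset (Finset (Fin n)) :=
  K.filter fun F => F.card ≤ i + 1

/-- The number of faces with `j` vertices, i.e. `f_{j-1}(K)`. -/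
def fcount (K : Finset (Finset (Fin n))) (j : ℕ) : ℕ :=
  (K.filter fun F => F.card = j).card

/-- The dimension of `K`, as an integer. -/
noncomputable def dimOf (K : Finset (Finset (Fin n))) : ℤ :=
  ((K.sup fun F => F.card : ℕ) : ℤ) - 1

variable (k : Type) [Field k]

/-- Simplicial chains supported on the faces of `K` having `j` vertices
(that is, `(j-1)`-dimensional chains), with coefficients in `k`. -/
abbrev chain (K : Finset (Finset (Fin n))) (j : ℕ) : Type :=
  {F : Finset (Fin n) // F ∈ K ∧ F.card = j} → k

/-- The simplicial boundary operator (with the standard orientation coming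
from the linear order on the vertices), viewed as landing in the space of
all functions on finsets. -/
noncomputable def bdry (K : Finset (Finset (Fin n))) (j : ℕ)
    (c : chain k K j) : Finset (Fin n) → k :=
  fun G => ∑ v : Fin n,
    if h : v ∉ G ∧ insert v G ∈ K ∧ (insert v G).card = j then
      (-1 : k) ^ (G.filter fun w => w < v).card * c ⟨insert v G, h.2⟩
    else 0

/-- Extension of a chain by zero to a function on all finsets. -/
def ext (K : Finset (Finset (Fin n))) (j : ℕ) (c : chain k K j) :
    Finset (Fin n) → k :=
  fun F => if h : F ∈ K ∧ F.card = j then c ⟨F, h⟩ else 0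

/-- `H̃_p(K; k) ≠ 0`: there is a reduced `p`-cycle which is not a boundary.
(For `p ≤ -2` this is false, as there is no `j : ℕ` with `j = p + 1`.) -/
def homNonzero (K : Finset (Finset (Fin n))) (p : ℤ) : Prop :=
  ∃ j : ℕ, (j : ℤ) = p + 1 ∧
    ∃ c : chain k K j, bdry k K j c = 0 ∧
      ∀ b : chain k K (j + 1), bdry k K (j + 1) b ≠ ext k K j c

/-- `H̃_p(K; k) ≅ k`: there is a reduced `p`-cycle `z` which is not a
boundary, and modulo boundaries every `p`-cycle is a multiple of `z`. -/
def homIsK (K : Finset (Finset (Fin n))) (p : ℤ) : Prop :=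
  ∃ j : ℕ, (j : ℤ) = p + 1 ∧
    ∃ z : chain k K j, bdry k K j z = 0 ∧
      (∀ b : chain k K (j + 1), bdry k K (j + 1) b ≠ ext k K j z) ∧
      ∀ c : chain k K j, bdry k K j c = 0 →
        ∃ a : k, ∃ b : chain k K (j + 1),
          bdry k K (j + 1) b = ext k K j (c - a • z)

/-- Cohen–Macaulayness of `K` over `k`, via Reisner's criterion:
`H̃_i(lk F; k) = 0` for every face `F` and every `i < dim K - |F|`. -/
def IsCM (K : Finset (Finset (Fin n))) : Prop :=
  ∀ F ∈ K, ∀ i : ℤ, i < dimOf K - F.card → ¬ homNonzero k (link K F) i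

/-- `K` is `q`-Cohen–Macaulay over `k`: removing any at most `q - 1`
vertices leaves a Cohen–Macaulay complex of the same dimension. -/
def IsQCM (q : ℕ) (K : Finset (Finset (Fin n))) : Prop :=
  ∀ U : Finset (Fin n), U.card ≤ q - 1 →
    IsCM k (induced K Uᶜ) ∧ dimOf (induced K Uᶜ) = dimOf K

/-- `q(K)`: the largest `q` for which `K` is `q`-CM over `k`. -/
noncomputable def qConn (K : Finset (Finset (Fin n))) : ℕ :=
  sSup {q : ℕ | IsQCM k q K}

/-- The CM-connectivity sequence: `q_i = q(Skel_i K)`. -/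
noncomputable def qSeq (K : Finset (Finset (Fin n))) (i : ℕ) : ℕ :=
  qConn k (skel K i)

/-- The minimal shifts `m_i` in the minimal free resolution of the face ring,
via Hochster's formula. -/
noncomputable def mshift (K : Finset (Finset (Fin n))) (i : ℕ) : ℕ :=
  sInf {m : ℕ | ∃ W : Finset (Fin n), W.card = m ∧
    homNonzero k (induced K W) ((W.card : ℤ) - i - 1)}

/-- The maximal shifts `M_i` in the minimal free resolution of the face ring,
via Hochster's formula. -/
noncomputable def Mshift (K : Finset (Finset (Fin n))) (i : ℕ) : ℕ :=
  sSup {m : ℕ | ∃ W : Finset (Fin n), W.card = m ∧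
    homNonzero k (induced K W) ((W.card : ℤ) - i - 1)}

/-- `K` is pure: every maximal face has cardinality `dim K + 1`. -/
def IsPure (K : Finset (Finset (Fin n))) : Prop :=
  ∀ F ∈ K, (∀ G ∈ K, F ⊆ G → G = F) → (F.card : ℤ) = dimOf K + 1

/-- `K` is connected: any two vertices are joined by a path of edges. -/
def Connected (K : Finset (Finset (Fin n))) : Prop :=
  ∀ u v : Fin n, {u} ∈ K → {v} ∈ K →
    Relation.ReflTransGen (fun a b => ({a, b} : Finset (Fin n)) ∈ K) u v

/-- `K` is Gorenstein* over `k`; by Stanley's topological characterization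
this means that `K` is a `k`-homology sphere: for every face `F` the link of
`F` has vanishing reduced homology below dimension `dim K - |F|` and reduced
homology isomorphic to `k` in dimension `dim K - |F|`. -/
def IsGorensteinStar (K : Finset (Finset (Fin n))) : Prop :=
  IsComplex K ∧
  (∀ F ∈ K, ∀ i : ℤ, i < dimOf K - F.card → ¬ homNonzero k (link K F) i) ∧
  (∀ F ∈ K, homIsK k (link K F) (dimOf K - F.card))

/-! ### Auxiliary lemmas -/

section Aux

lemma mem_skel {K : Finset (Finset (Fin n))} {i : ℕ} {F : Finset (Fin n)} :
    F ∈ skel K i ↔ F ∈ K ∧ F.card ≤ i + 1 := Finset.mem_filter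

lemma mem_induced {K : Finset (Finset (Fin n))} {W : Finset (Fin n)}
    {F : Finset (Fin n)} : F ∈ induced K W ↔ F ∈ K ∧ F ⊆ W := Finset.mem_filter

lemma mem_link {K : Finset (Finset (Fin n))} {F G : Finset (Fin n)} :
    G ∈ link K F ↔ G ∈ K ∧ F ∩ G = ∅ ∧ F ∪ G ∈ K := by
  simp [link, Finset.mem_filter, and_assoc]

lemma skel_skel (K : Finset (Finset (Fin n))) {i j : ℕ} (h : i ≤ j) :
    skel (skel K j) i = skel K i := by
  ext F; simp only [mem_skel]
  constructor
  · rintro ⟨⟨h1, _⟩, h3⟩; exact ⟨h1, h3⟩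
  · rintro ⟨h1, h3⟩; exact ⟨⟨h1, by omega⟩, h3⟩

lemma skel_eq_self {K : Finset (Finset (Fin n))} {i : ℕ}
    (h : ∀ F ∈ K, F.card ≤ i + 1) : skel K i = K := by
  ext F; simp only [mem_skel]
  exact ⟨fun hf => hf.1, fun hf => ⟨hf, h F hf⟩⟩

lemma sup_card_eq {K : Finset (Finset (Fin n))} {d : ℕ}
    (hdim : dimOf K = (d : ℤ) - 1) : (K.sup fun F => F.card) = d := by
  unfold dimOf at hdim; omega

lemma card_le_of_dim {K : Finset (Finset (Fin n))} {d : ℕ}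
    (hdim : dimOf K = (d : ℤ) - 1) {F : Finset (Fin n)} (hF : F ∈ K) :
    F.card ≤ d := by
  rw [← sup_card_eq hdim]; exact Finset.le_sup hF

lemma exists_card_eq {K : Finset (Finset (Fin n))} {d : ℕ} (hd : 0 < d)
    (hdim : dimOf K = (d : ℤ) - 1) : ∃ F ∈ K, F.card = d := by
  have hsup := sup_card_eq hdim
  rcases K.eq_empty_or_nonempty with rfl | hne
  · simp at hsup; omega
  · obtain ⟨F, hF, hFs⟩ := Finset.exists_mem_eq_sup K hne fun F => F.card
    exact ⟨F, hF, by omega⟩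

lemma induced_univ (K : Finset (Finset (Fin n))) :
    induced K Finset.univ = K :=
  Finset.filter_true_of_mem fun F _ => Finset.subset_univ F

lemma dim_skel {K : Finset (Finset (Fin n))} (hK : IsComplex K) {d t : ℕ}
    (hdim : dimOf K = (d : ℤ) - 1) (ht : t + 1 ≤ d) :
    dimOf (skel K t) = (t : ℤ) := by
  have hsup : ((skel K t).sup fun F => F.card) = t + 1 := by
    apply le_antisymm
    · exact Finset.sup_le fun F hF => (mem_skel.1 hF).2
    · obtain ⟨F, hF, hFc⟩ := exists_card_eq (by omega) hdim
      obtain ⟨G, hGF, hGc⟩ := Finset.exists_subset_card_eq (s := F) (n := t + 1) (by omega)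
      have hG : G ∈ skel K t := mem_skel.2 ⟨hK.2 F hF G hGF, by omega⟩
      calc t + 1 = G.card := hGc.symm
        _ ≤ _ := Finset.le_sup hG
  unfold dimOf; rw [hsup]; push_cast; ring

lemma dim_induced_empty (K : Finset (Finset (Fin n))) :
    dimOf (induced K ∅) = -1 := by
  have : ((induced K ∅).sup fun F => F.card) = 0 := by
    apply Nat.le_zero.1
    apply Finset.sup_le
    intro F hF
    have := (mem_induced.1 hF).2
    simp [Finset.subset_empty.1 this]
  unfold dimOf; rw [this]; rfl

lemma isQCM_one {k : Type} [Field k] {K : Finset (Finset (Fin n))}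
    (hCM : IsCM k K) : IsQCM k 1 K := by
  intro U hU
  have : U = ∅ := Finset.card_eq_zero.1 (by omega)
  subst this
  rw [show (∅ᶜ : Finset (Fin n)) = Finset.univ by simp, induced_univ]
  exact ⟨hCM, rfl⟩

lemma isQCM_le {k : Type} [Field k] {K : Finset (Finset (Fin n))} {q : ℕ}
    (hq : IsQCM k q K) (hd : 0 ≤ dimOf K) : q ≤ n := by
  by_contra h
  push_neg at h
  have hU : (Finset.univ : Finset (Fin n)).card ≤ q - 1 := by
    simp [Finset.card_univ]; omega
  have := (hq Finset.univ hU).2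
  rw [show (Finset.univ : Finset (Fin n))ᶜ = ∅ by simp,
    dim_induced_empty] at this
  omega

lemma isQCM_qConn {k : Type} [Field k] {K : Finset (Finset (Fin n))}
    (hCM : IsCM k K) (hd : 0 ≤ dimOf K) : IsQCM k (qConn k K) K := by
  have : qConn k K ∈ {q : ℕ | IsQCM k q K} :=
    Nat.sSup_mem ⟨1, isQCM_one hCM⟩ ⟨n, fun q hq => isQCM_le hq hd⟩
  exact this

lemma qConn_le {k : Type} [Field k] {K : Finset (Finset (Fin n))}
    (hCM : IsCM k K) (hd : 0 ≤ dimOf K) : qConn k K ≤ n :=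
  isQCM_le (isQCM_qConn hCM hd) hd

/-- The complex `{∅}` has nonvanishing reduced homology in degree `-1`. -/
lemma homNonzero_trivial (k : Type) [Field k] :
    homNonzero k ({∅} : Finset (Finset (Fin n))) (-1) := by
  refine ⟨0, by norm_num, fun _ => 1, ?_, ?_⟩
  · funext G
    apply Finset.sum_eq_zero
    intro v _
    rw [dif_neg]
    rintro ⟨-, -, hc⟩
    exact Finset.insert_ne_empty v G (Finset.card_eq_zero.1 hc)
  · intro b hb
    have h0 := congrFun hb ∅
    unfold bdry ext at h0
    rw [dif_pos ⟨Finset.mem_singleton_self ∅, Finset.card_empty⟩] at h0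
    rw [Finset.sum_eq_zero] at h0
    · exact one_ne_zero h0.symm
    · intro v _
      rw [dif_neg]
      rintro ⟨-, hm, -⟩
      exact Finset.insert_ne_empty v ∅ (Finset.mem_singleton.1 hm)

/-- In a `q`-CM complex, every face of cardinality `dim K` (a "ridge") is
contained in at least `q` facets. -/
lemma ridge_deg {k : Type} [Field k] {K : Finset (Finset (Fin n))}
    (hK : IsComplex K) {q : ℕ} (hq : IsQCM k q K) {R : Finset (Fin n)}
    (hR : R ∈ K) (hcard : (R.card : ℤ) = dimOf K) :
    q ≤ (Finset.univ.filter fun v => v ∉ R ∧ insert v R ∈ K).card := by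
  by_contra hcon
  push_neg at hcon
  set N : Finset (Fin n) := Finset.univ.filter fun v => v ∉ R ∧ insert v R ∈ K
    with hN
  obtain ⟨hCM', hdim'⟩ := hq N (by omega)
  set Δ' := induced K Nᶜ with hΔ'
  have hmemN : ∀ v : Fin n, v ∈ N ↔ v ∉ R ∧ insert v R ∈ K := by
    intro v; simp [hN]
  have hRΔ' : R ∈ Δ' := by
    rw [hΔ', mem_induced]
    refine ⟨hR, fun v hv => ?_⟩
    rw [Finset.mem_compl, hmemN]
    rintro ⟨hvR, -⟩
    exact hvR hv
  have hcompl : IsComplex Δ' := by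
    constructor
    · exact mem_induced.2 ⟨hK.1, Finset.empty_subset _⟩
    · intro F hF G hGF
      obtain ⟨hFK, hFW⟩ := mem_induced.1 hF
      exact mem_induced.2 ⟨hK.2 F hFK G hGF, hGF.trans hFW⟩
  have hlink : link Δ' R = {∅} := by
    ext G
    rw [mem_link, Finset.mem_singleton]
    constructor
    · rintro ⟨hGΔ', hint, hun⟩
      by_contra hGne
      obtain ⟨v, hv⟩ := Finset.nonempty_iff_ne_empty.2 hGne
      have hvR : v ∉ R := by
        intro hvR
        have : v ∈ R ∩ G := Finset.mem_inter.2 ⟨hvR, hv⟩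
        rw [hint] at this
        exact absurd this (Finset.notMem_empty v)
      have hins : insert v R ∈ K := by
        apply hK.2 (R ∪ G) (mem_induced.1 hun).1
        intro w hw
        rcases Finset.mem_insert.1 hw with rfl | hwR
        · exact Finset.mem_union_right _ hv
        · exact Finset.mem_union_left _ hwR
      have hvN : v ∈ N := (hmemN v).2 ⟨hvR, hins⟩
      have := (mem_induced.1 hGΔ').2 hv
      rw [Finset.mem_compl] at this
      exact this hvN
    · rintro rfl
      exact ⟨hcompl.1, Finset.inter_empty R, by rwa [Finset.union_empty]⟩
  have hhom : ¬ homNonzero k (link Δ' R) (-1) := by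
    apply hCM' R hRΔ' (-1)
    rw [hdim']
    omega
  rw [hlink] at hhom
  exact hhom (homNonzero_trivial k)

lemma bdry_congr {k : Type} [Field k] {K₁ K₂ : Finset (Finset (Fin n))} {j : ℕ}
    (hiff : ∀ F : Finset (Fin n), F.card = j → (F ∈ K₁ ↔ F ∈ K₂))
    (c₁ : chain k K₁ j) (c₂ : chain k K₂ j)
    (hc : ∀ (F : Finset (Fin n)) (h₁ : F ∈ K₁ ∧ F.card = j)
      (h₂ : F ∈ K₂ ∧ F.card = j), c₁ ⟨F, h₁⟩ = c₂ ⟨F, h₂⟩) :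
    bdry k K₁ j c₁ = bdry k K₂ j c₂ := by
  funext G
  apply Finset.sum_congr rfl
  intro v _
  by_cases h : v ∉ G ∧ insert v G ∈ K₁ ∧ (insert v G).card = j
  · have h' : v ∉ G ∧ insert v G ∈ K₂ ∧ (insert v G).card = j :=
      ⟨h.1, (hiff _ h.2.2).1 h.2.1, h.2.2⟩
    rw [dif_pos h, dif_pos h', hc _ ⟨h.2.1, h.2.2⟩ ⟨h'.2.1, h'.2.2⟩]
  · have h' : ¬ (v ∉ G ∧ insert v G ∈ K₂ ∧ (insert v G).card = j) := by
      rintro ⟨h1, h2, h3⟩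
      exact h ⟨h1, (hiff _ h3).2 h2, h3⟩
    rw [dif_neg h, dif_neg h']

lemma ext_congr {k : Type} [Field k] {K₁ K₂ : Finset (Finset (Fin n))} {j : ℕ}
    (hiff : ∀ F : Finset (Fin n), F.card = j → (F ∈ K₁ ↔ F ∈ K₂))
    (c₁ : chain k K₁ j) (c₂ : chain k K₂ j)
    (hc : ∀ (F : Finset (Fin n)) (h₁ : F ∈ K₁ ∧ F.card = j)
      (h₂ : F ∈ K₂ ∧ F.card = j), c₁ ⟨F, h₁⟩ = c₂ ⟨F, h₂⟩) :
    ext k K₁ j c₁ = ext k K₂ j c₂ := by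
  funext F
  unfold ext
  by_cases h : F ∈ K₁ ∧ F.card = j
  · have h' : F ∈ K₂ ∧ F.card = j := ⟨(hiff _ h.2).1 h.1, h.2⟩
    rw [dif_pos h, dif_pos h', hc _ h h']
  · have h' : ¬ (F ∈ K₂ ∧ F.card = j) := by
      rintro ⟨h1, h2⟩
      exact h ⟨(hiff _ h2).2 h1, h2⟩
    rw [dif_neg h, dif_neg h']

/-- Nonvanishing homology of a skeleton, below the truncation degree,
passes to the original complex. -/
lemma homNonzero_skel {k : Type} [Field k] {L : Finset (Finset (Fin n))}
    {m : ℕ} {i : ℤ} (him : i + 1 ≤ (m : ℤ)) :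
    homNonzero k (skel L m) i → homNonzero k L i := by
  rintro ⟨j, hj, c, hc, hnb⟩
  have hjm : j ≤ m := by omega
  have hiffj : ∀ F : Finset (Fin n), F.card = j → (F ∈ skel L m ↔ F ∈ L) := by
    intro F hF
    rw [mem_skel]
    exact ⟨fun h => h.1, fun h => ⟨h, by omega⟩⟩
  have hiffj1 : ∀ F : Finset (Fin n), F.card = j + 1 →
      (F ∈ L ↔ F ∈ skel L m) := by
    intro F hF
    rw [mem_skel]
    exact ⟨fun h => ⟨h, by omega⟩, fun h => h.1⟩
  refine ⟨j, hj, fun F => c ⟨F.1, (hiffj F.1 F.2.2).2 F.2.1, F.2.2⟩, ?_, ?_⟩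
  · rw [← hc]
    exact (bdry_congr (fun F hF => hiffj F hF)
      c (fun F => c ⟨F.1, (hiffj F.1 F.2.2).2 F.2.1, F.2.2⟩)
      (fun F h₁ h₂ => rfl)).symm
  · intro b hb
    apply hnb fun F => b ⟨F.1, (mem_skel.1 F.2.1).1, F.2.2⟩
    calc bdry k (skel L m) (j + 1)
          (fun F => b ⟨F.1, (mem_skel.1 F.2.1).1, F.2.2⟩)
        = bdry k L (j + 1) b :=
          bdry_congr (fun F hF => (hiffj1 F hF).symm)
            (fun F => b ⟨F.1, (mem_skel.1 F.2.1).1, F.2.2⟩) b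
            fun F h₁ h₂ => rfl
      _ = ext k L j (fun F => c ⟨F.1, (hiffj F.1 F.2.2).2 F.2.1, F.2.2⟩) := hb
      _ = ext k (skel L m) j c :=
          ext_congr (fun F hF => (hiffj F hF).symm)
            (fun F => c ⟨F.1, (hiffj F.1 F.2.2).2 F.2.1, F.2.2⟩) c
            fun F h₁ h₂ => rfl

lemma link_skel {K : Finset (Finset (Fin n))} {t : ℕ} {F : Finset (Fin n)}
    (hFc : F.card ≤ t) :
    link (skel K t) F = skel (link K F) (t - F.card) := by
  ext G
  simp only [mem_link, mem_skel]
  constructor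
  · rintro ⟨⟨hGK, hGc⟩, hint, hFG, hFGc⟩
    have hdisj : Disjoint F G := Finset.disjoint_iff_inter_eq_empty.2 hint
    have hcard := Finset.card_union_of_disjoint hdisj
    exact ⟨⟨hGK, hint, hFG⟩, by omega⟩
  · rintro ⟨⟨hGK, hint, hFG⟩, hGc⟩
    have hdisj : Disjoint F G := Finset.disjoint_iff_inter_eq_empty.2 hint
    have hcard := Finset.card_union_of_disjoint hdisj
    exact ⟨⟨hGK, by omega⟩, hint, hFG, by omega⟩

/-- The codimension-one skeleton of a Cohen–Macaulay complex is
Cohen–Macaulay. -/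
lemma isCM_skel {k : Type} [Field k] {K : Finset (Finset (Fin n))}
    (hK : IsComplex K) {d : ℕ} (hd : 2 ≤ d) (hdim : dimOf K = (d : ℤ) - 1)
    (hCM : IsCM k K) : IsCM k (skel K (d - 2)) := by
  intro F hF i hi hnz
  have hdim' : dimOf (skel K (d - 2)) = ((d - 2 : ℕ) : ℤ) :=
    dim_skel hK hdim (by omega)
  have hige : (-1 : ℤ) ≤ i := by
    obtain ⟨j, hj, -⟩ := hnz
    omega
  rw [hdim'] at hi
  have hFc : F.card ≤ d - 2 := by omega
  rw [link_skel hFc] at hnz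
  have h2 : homNonzero k (link K F) i :=
    homNonzero_skel (by omega) hnz
  exact hCM F (mem_skel.1 hF).1 i (by rw [hdim]; omega) h2

/-- Double counting incidences between facets and ridges. -/
lemma count_pairs {K : Finset (Finset (Fin n))} (hK : IsComplex K) {d : ℕ}
    (hd : 1 ≤ d) :
    d * fcount K d =
      ∑ R ∈ K.filter fun R => R.card = d - 1,
        (Finset.univ.filter fun v => v ∉ R ∧ insert v R ∈ K).card := by
  have lhs : d * fcount K d =
      ((K.filter fun F => F.card = d).sigma fun F => F).card := by
    rw [Finset.card_sigma, fcount, Finset.sum_congr rfl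
      (fun F hF => (Finset.mem_filter.1 hF).2), Finset.sum_const,
      smul_eq_mul, mul_comm]
  rw [lhs, Finset.card_bij'
    (i := fun p _ => (⟨p.1.erase p.2, p.2⟩ :
      (_ : Finset (Fin n)) × Fin n))
    (j := fun p _ => (⟨insert p.2 p.1, p.2⟩ :
      (_ : Finset (Fin n)) × Fin n)), Finset.card_sigma]
  · rintro ⟨F, v⟩ hp
    rw [Finset.mem_sigma, Finset.mem_filter] at hp ⊢
    obtain ⟨⟨hFK, hFc⟩, hv⟩ := hp
    refine ⟨⟨hK.2 F hFK _ (Finset.erase_subset v F), by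
      rw [Finset.card_erase_of_mem hv, hFc]⟩, ?_⟩
    rw [Finset.mem_filter]
    exact ⟨Finset.mem_univ v, Finset.notMem_erase v F,
      by rwa [Finset.insert_erase hv]⟩
  · rintro ⟨R, v⟩ hp
    rw [Finset.mem_sigma, Finset.mem_filter] at hp
    rw [Finset.mem_sigma, Finset.mem_filter]
    obtain ⟨⟨hRK, hRc⟩, hv⟩ := hp
    rw [Finset.mem_filter] at hv
    obtain ⟨-, hvR, hins⟩ := hv
    exact ⟨⟨hins, by rw [Finset.card_insert_of_notMem hvR, hRc]; omega⟩,
      Finset.mem_insert_self v R⟩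
  · rintro ⟨F, v⟩ hp
    rw [Finset.mem_sigma] at hp
    exact Sigma.ext (by simp [Finset.insert_erase hp.2]) (by simp)
  · rintro ⟨R, v⟩ hp
    rw [Finset.mem_sigma, Finset.mem_filter] at hp
    obtain ⟨-, hv⟩ := hp
    rw [Finset.mem_filter] at hv
    exact Sigma.ext (by simp [Finset.erase_insert hv.2.1]) (by simp)

lemma main_aux (k : Type) [Field k] :
    ∀ d : ℕ, ∀ K : Finset (Finset (Fin n)), 0 < d → IsComplex K →
      (∀ v : Fin n, {v} ∈ K) → dimOf K = ((d : ℕ) : ℤ) - 1 → IsCM k K →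
      (∏ i ∈ Finset.range d, (qSeq k K i : ℚ)) / d.factorial ≤ fcount K d := by
  intro d
  induction d with
  | zero => intro K h; exact absurd h (by omega)
  | succ d ih =>
    intro K hd hK hv hdim hCM
    have hcards : ∀ F ∈ K, F.card ≤ d + 1 := fun F hF => card_le_of_dim hdim hF
    have hskelK : skel K d = K := skel_eq_self hcards
    have hqd : qSeq k K d = qConn k K := by rw [qSeq, hskelK]
    have hdge : (0 : ℤ) ≤ dimOf K := by rw [hdim]; push_cast; omega
    have hqcm := isQCM_qConn hCM hdge
    -- counting bound : q * f_{d-1} ≤ d * f_d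
    have hcount : qConn k K * fcount K d ≤ (d + 1) * fcount K (d + 1) := by
      rw [count_pairs hK (by omega : 1 ≤ d + 1)]
      have hstep : qConn k K * fcount K d =
          ∑ _R ∈ K.filter fun R => R.card = d, qConn k K := by
        rw [Finset.sum_const, smul_eq_mul, mul_comm]; rfl
      rw [hstep]
      have hdd : (d + 1) - 1 = d := rfl
      rw [hdd]
      apply Finset.sum_le_sum
      intro R hR
      obtain ⟨hRK, hRc⟩ := Finset.mem_filter.1 hR
      exact ridge_deg hK hqcm hRK (by rw [hdim, hRc]; push_cast; ring)
    rcases Nat.eq_zero_or_pos d with h0 | hd1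
    · -- base case: dimension 0
      subst h0
      have hqle : qConn k K ≤ n := qConn_le hCM hdge
      have hf1 : fcount K 1 = n := by
        unfold fcount
        have himg : (K.filter fun F => F.card = 1) =
            Finset.univ.image fun v => ({v} : Finset (Fin n)) := by
          ext F
          simp only [Finset.mem_filter, Finset.mem_image, Finset.mem_univ,
            true_and]
          constructor
          · rintro ⟨hFK, hFc⟩
            obtain ⟨v, rfl⟩ := Finset.card_eq_one.1 hFc
            exact ⟨v, rfl⟩
          · rintro ⟨v, rfl⟩
            exact ⟨hv v, Finset.card_singleton v⟩
        rw [himg, Finset.card_image_of_injective _ Finset.singleton_injective,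
          Finset.card_univ, Fintype.card_fin]
      rw [Finset.prod_range_one, Nat.factorial_one, Nat.cast_one, div_one,
        hf1]
      have : qSeq k K 0 = qConn k K := hqd
      rw [this]
      exact_mod_cast hqle
    · -- inductive step
      set K' := skel K (d - 1) with hK'def
      have hK' : IsComplex K' := by
        constructor
        · exact mem_skel.2 ⟨hK.1, by simp⟩
        · intro F hF G hGF
          exact mem_skel.2 ⟨hK.2 F (mem_skel.1 hF).1 G hGF,
            le_trans (Finset.card_le_card hGF) (mem_skel.1 hF).2⟩
      have hv' : ∀ v : Fin n, {v} ∈ K' := fun v =>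
        mem_skel.2 ⟨hv v, by rw [Finset.card_singleton]; omega⟩
      have hdim' : dimOf K' = ((d : ℕ) : ℤ) - 1 := by
        rw [hK'def, dim_skel hK hdim (by omega : (d - 1) + 1 ≤ d + 1)]
        omega
      have hCM' : IsCM k K' := by
        have := isCM_skel hK (by omega : 2 ≤ d + 1) hdim hCM
        rwa [show d + 1 - 2 = d - 1 by omega] at this
      have IH := ih K' hd1 hK' hv' hdim' hCM'
      have hqeq : ∀ i ∈ Finset.range d, (qSeq k K' i : ℚ) = qSeq k K i := by
        intro i hi
        rw [Finset.mem_range] at hi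
        rw [qSeq, qSeq, hK'def, skel_skel K (by omega : i ≤ d - 1)]
      have hfeq : fcount K' d = fcount K d := by
        unfold fcount
        congr 1
        ext F
        simp only [Finset.mem_filter, hK'def, mem_skel]
        constructor
        · rintro ⟨⟨h1, -⟩, h3⟩; exact ⟨h1, h3⟩
        · rintro ⟨h1, h3⟩; exact ⟨⟨h1, by omega⟩, h3⟩
      rw [Finset.prod_congr rfl hqeq, hfeq] at IH
      -- now the arithmetic
      have hfacpos : (0 : ℚ) < (d.factorial : ℚ) := by
        exact_mod_cast d.factorial_pos
      have hfacpos1 : (0 : ℚ) < ((d + 1).factorial : ℚ) := by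
        exact_mod_cast (d + 1).factorial_pos
      have hP : (∏ i ∈ Finset.range d, (qSeq k K i : ℚ)) ≤
          (d.factorial : ℚ) * fcount K d := by
        rw [div_le_iff₀ hfacpos] at IH
        calc (∏ i ∈ Finset.range d, (qSeq k K i : ℚ))
            ≤ (fcount K d : ℚ) * d.factorial := IH
          _ = (d.factorial : ℚ) * fcount K d := by ring
      have hq0 : (0 : ℚ) ≤ (qConn k K : ℚ) := Nat.cast_nonneg _
      have hcount' : (qConn k K : ℚ) * fcount K d ≤
          ((d : ℚ) + 1) * fcount K (d + 1) := by
        exact_mod_cast hcount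
      rw [Finset.prod_range_succ, hqd, div_le_iff₀ hfacpos1]
      calc (∏ i ∈ Finset.range d, (qSeq k K i : ℚ)) * (qConn k K : ℚ)
          ≤ ((d.factorial : ℚ) * fcount K d) * (qConn k K : ℚ) := by
            apply mul_le_mul_of_nonneg_right hP hq0
        _ = (d.factorial : ℚ) * ((qConn k K : ℚ) * fcount K d) := by ring
        _ ≤ (d.factorial : ℚ) * (((d : ℚ) + 1) * fcount K (d + 1)) := by
            apply mul_le_mul_of_nonneg_left hcount' (le_of_lt hfacpos)
        _ = (fcount K (d + 1) : ℚ) * ((d + 1).factorial : ℚ) := by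
            rw [Nat.factorial_succ]
            push_cast
            ring

end Aux

/-- Theorem 1.4: for a Cohen–Macaulay complex of dimension `d - 1` with
CM-connectivity sequence `(q_0, …, q_{d-1})`, the number of facets satisfies
`f_{d-1} ≥ q_0 q_1 ⋯ q_{d-1} / d!`. -/
theorem facet_count_lower_bound
    (n d : ℕ) (k : Type) [Field k] (K : Finset (Finset (Fin n)))
    (hd : 0 < d)
    (hK : IsComplex K) (hv : ∀ v : Fin n, {v} ∈ K)
    (hdim : dimOf K = (d : ℤ) - 1)
    (hCM : IsCM k K) :
    (∏ i ∈ Finset.range d, (qSeq k K i : ℚ)) / d.factorial ≤ fcount K d :=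
  main_aux k d K hd hK hv hdim hCM

end MultConj
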